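/- For the Beam-Warming scheme with CFL parameter λ > 0, the symbol γ(ξ) = (λ(λ-1)/2) e^{-2iξ} + λ(2-λ) e^{-iξ} + ((λ-1)(λ-2)/2) satisfies |γ(ξ)|² = 1 - λ(2-λ)(λ-1)²(1-cos ξ)² for all real ξ. -/

import Mathlib

open Complex

/-- For the Beam-Warming scheme with CFL parameter `λ > 0`, the squared modulus of the
symbol satisfies `|γ(ξ)|² = 1 - λ(2-λ)(λ-1)²(1-cos ξ)²`. -/
theorem beamWarming_symbol_sq (lam : ℝ) (hlam : 0 < lam) (ξ : ℝ) :
    ‖((lam * (lam - 1) / 2 : ℂ) * Complex.exp (-(2 : ℂ) * Complex.I * ξ)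
      + (lam * (2 - lam) : ℂ) * Complex.exp (-Complex.I * ξ)
      + ((lam - 1) * (lam - 2) / 2 : ℂ))‖ ^ 2
    = 1 - lam * (2 - lam) * (lam - 1) ^ 2 * (1 - Real.cos ξ) ^ 2 := by
  have h1 : -(2 : ℂ) * Complex.I * ξ = ((-2 * ξ : ℝ) : ℂ) * Complex.I := by push_cast; ring
  have h2 : -Complex.I * (ξ : ℂ) = ((-ξ : ℝ) : ℂ) * Complex.I := by push_cast; ring
  set A : ℝ := lam * (lam - 1) / 2 * Real.cos (-2 * ξ) + lam * (2 - lam) * Real.cos (-ξ)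
      + (lam - 1) * (lam - 2) / 2 with hA
  set B : ℝ := lam * (lam - 1) / 2 * Real.sin (-2 * ξ) + lam * (2 - lam) * Real.sin (-ξ) with hB
  have key : (lam * (lam - 1) / 2 : ℂ) * Complex.exp (-(2 : ℂ) * Complex.I * ξ)
      + (lam * (2 - lam) : ℂ) * Complex.exp (-Complex.I * ξ)
      + ((lam - 1) * (lam - 2) / 2 : ℂ) = (A : ℂ) + (B : ℂ) * Complex.I := by
    rw [h1, h2, Complex.exp_mul_I, Complex.exp_mul_I, ← Complex.ofReal_cos,
      ← Complex.ofReal_sin, ← Complex.ofReal_cos, ← Complex.ofReal_sin, hA, hB]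
    push_cast
    ring
  rw [key, ← Complex.normSq_eq_norm_sq, Complex.normSq_add_mul_I, hA, hB]
  have hc2 : Real.cos (-2 * ξ) = 2 * Real.cos ξ ^ 2 - 1 := by
    rw [show (-2 * ξ) = 2 * (-ξ) by ring, Real.cos_two_mul, Real.cos_neg]
  have hs2 : Real.sin (-2 * ξ) = -(2 * Real.sin ξ * Real.cos ξ) := by
    rw [show (-2 * ξ) = -(2 * ξ) by ring, Real.sin_neg, Real.sin_two_mul]
  rw [hc2, hs2, Real.cos_neg, Real.sin_neg]
  have hpy : Real.sin ξ ^ 2 = 1 - Real.cos ξ ^ 2 := by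
    have := Real.sin_sq_add_cos_sq ξ; linarith
  linear_combination (lam * (lam - 1) * Real.cos ξ + lam * (2 - lam)) ^ 2 * hpy
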